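/- Let F(Ω) and F(Ω,E) be ε-compatible function spaces (i.e., S : F(Ω) ε E → F(Ω,E), S(u)(x)=u(δₓ), is an isomorphism), let (fₙ) be an equicontinuous Schauder basis of F(Ω) with coefficient functionals (λₙ^K), and let λₙ^E : F(Ω,E) → E satisfy λₙ^E(S(u)) = u(λₙ^K) for all u and n. Then every f ∈ F(Ω,E) has the convergent series representation f = Σ_{n=1}^{∞} λₙ^E(f)·fₙ in F(Ω,E). -/

import Mathlib

open Filter Topology
open scoped Uniformity
open Set

/-- The collection of absolutely convex compact subsets of `F`. -/
def kappaSets (𝕜 F : Type*) [RCLike 𝕜] [AddCommGroup F] [Module 𝕜 F] [Module ℝ F]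
    [UniformSpace F] : Set (Set F) :=
  {s : Set F | IsCompact s ∧ Balanced 𝕜 s ∧ Convex ℝ s}

/-- `F'_κ`. -/
abbrev DualKappa (𝕜 F : Type*) [RCLike 𝕜] [AddCommGroup F] [Module 𝕜 F] [Module ℝ F]
    [UniformSpace F] [IsUniformAddGroup F] [ContinuousSMul 𝕜 F] :=
  UniformConvergenceCLM (RingHom.id 𝕜) 𝕜 (kappaSets 𝕜 F)

/-- Schwartz' ε-product `F ε E = L_e(F'_κ, E)`. -/
abbrev EpsilonProduct (𝕜 F E : Type*) [RCLike 𝕜]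
    [AddCommGroup F] [Module 𝕜 F] [UniformSpace F] [IsUniformAddGroup F]
    [ContinuousSMul 𝕜 F] [Module ℝ F]
    [AddCommGroup E] [Module 𝕜 E] [UniformSpace E] [IsUniformAddGroup E]
    [ContinuousSMul 𝕜 E] :=
  UniformConvergenceCLM (RingHom.id 𝕜) E
    {S : Set (DualKappa 𝕜 F) | Equicontinuous (fun φ : S => (φ.1 : F → 𝕜))}

section Aux

variable {𝕜 FF : Type*} [RCLike 𝕜] [AddCommGroup FF] [Module 𝕜 FF] [Module ℝ FF]
  [UniformSpace FF] [IsUniformAddGroup FF] [ContinuousSMul 𝕜 FF] [IsScalarTower ℝ 𝕜 FF]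

lemma kappaSets_cover : ⋃₀ kappaSets 𝕜 FF = Set.univ := by
  refine Set.eq_univ_of_forall fun x => ?_
  refine ⟨(fun c : 𝕜 => c • x) '' Metric.closedBall 0 1, ⟨?_, ?_, ?_⟩,
    ⟨1, by simp, one_smul 𝕜 x⟩⟩
  · exact (isCompact_closedBall (0:𝕜) 1).image (continuous_id.smul continuous_const)
  · rintro a ha _ ⟨_, ⟨c, hc, rfl⟩, rfl⟩
    refine ⟨a * c, ?_, by simp [mul_smul]⟩
    rw [Metric.mem_closedBall, dist_zero_right] at hc ⊢
    calc ‖a * c‖ = ‖a‖ * ‖c‖ := norm_mul a c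
    _ ≤ 1 * 1 := mul_le_mul ha hc (norm_nonneg c) zero_le_one
    _ = 1 := one_mul 1
  · exact (convex_closedBall (0:𝕜) 1).linear_image
      { toFun := fun c => c • x, map_add' := fun a b => add_smul a b x,
        map_smul' := fun r c => smul_assoc r c x }

lemma kappaSets_zero_mem : ({0} : Set FF) ∈ kappaSets 𝕜 FF := by
  refine ⟨isCompact_singleton, ?_, convex_singleton 0⟩
  intro a _
  rintro _ ⟨z, hz, rfl⟩
  simp_all

lemma kappaSets_directed : DirectedOn (· ⊆ ·) (kappaSets 𝕜 FF) := by
  haveI : ContinuousSMul ℝ FF := IsScalarTower.continuousSMul 𝕜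
  rintro K₁ ⟨hc₁, hb₁, hv₁⟩ K₂ ⟨hc₂, hb₂, hv₂⟩
  rcases K₁.eq_empty_or_nonempty with rfl | hne₁
  · exact ⟨K₂, ⟨hc₂, hb₂, hv₂⟩, empty_subset _, subset_rfl⟩
  rcases K₂.eq_empty_or_nonempty with rfl | hne₂
  · exact ⟨K₁, ⟨hc₁, hb₁, hv₁⟩, subset_rfl, empty_subset _⟩
  obtain ⟨x₀, hx₀⟩ := hne₁
  obtain ⟨y₀, hy₀⟩ := hne₂
  have himage : convexJoin ℝ K₁ K₂ =
      (fun p : ℝ × FF × FF => p.1 • p.2.1 + (1 - p.1) • p.2.2) ''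
        (Set.Icc (0:ℝ) 1 ×ˢ K₁ ×ˢ K₂) := by
    ext z
    constructor
    · rw [mem_convexJoin]
      rintro ⟨x, hx, y, hy, a, b, ha, hb, hab, rfl⟩
      exact ⟨(a, x, y), ⟨⟨ha, by linarith⟩, hx, hy⟩, by
        simp only []
        rw [show (1:ℝ) - a = b by linarith]⟩
    · rintro ⟨⟨a, x, y⟩, ⟨⟨ha0, ha1⟩, hx, hy⟩, rfl⟩
      rw [mem_convexJoin]
      exact ⟨x, hx, y, hy, a, 1 - a, ha0, by linarith, by ring, rfl⟩
  refine ⟨convexJoin ℝ K₁ K₂, ⟨?_, ?_, hv₁.convexJoin hv₂⟩, ?_, ?_⟩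
  · rw [himage]
    exact ((isCompact_Icc).prod (hc₁.prod hc₂)).image (by fun_prop)
  · intro a ha
    rintro _ ⟨z, hz, rfl⟩
    rw [mem_convexJoin] at hz ⊢
    obtain ⟨x, hx, y, hy, s, t, hs, ht, hst, rfl⟩ := hz
    refine ⟨a • x, hb₁ a ha (smul_mem_smul_set hx), a • y, hb₂ a ha (smul_mem_smul_set hy),
      s, t, hs, ht, hst, ?_⟩
    show _ = a • (s • x + t • y)
    rw [smul_add, smul_comm a s x, smul_comm a t y]
  · intro x hx
    rw [mem_convexJoin]
    exact ⟨x, hx, y₀, hy₀, left_mem_segment ℝ x y₀⟩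
  · intro y hy
    rw [mem_convexJoin]
    exact ⟨x₀, hx₀, y, hy, right_mem_segment ℝ x₀ y⟩

lemma partialSum_unif (f : ℕ → FF) (lam : ℕ → FF →L[𝕜] 𝕜)
    (hrepr : ∀ x : FF,
      Tendsto (fun k => ∑ n ∈ Finset.range k, lam n x • f n) atTop (𝓝 x))
    (hequi : Equicontinuous
      (fun k : ℕ => fun x : FF => ∑ n ∈ Finset.range k, lam n x • f n))
    {K : Set FF} (hK : IsCompact K) {O : Set FF} (hO : O ∈ 𝓝 (0:FF)) :
    ∀ᶠ k in atTop, ∀ y ∈ K, (∑ n ∈ Finset.range k, lam n y • f n) - y ∈ O := by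
  haveI : CompactSpace K := isCompact_iff_compactSpace.mp hK
  set T : ℕ → FF → FF := fun k x => ∑ n ∈ Finset.range k, lam n x • f n with hT
  have heq : Equicontinuous (fun k => (fun y : K => T k y.1)) := fun y U hU =>
    (continuous_subtype_val.tendsto y).eventually (hequi y.1 U hU)
  have hpt : Tendsto (fun k => (fun y : K => T k y.1)) atTop (𝓝 fun y : K => y.1) :=
    tendsto_pi_nhds.mpr fun y => hrepr y.1
  have huf : TendstoUniformly (fun k (y : K) => T k y.1) (fun y : K => y.1) atTop := by
    have := (heq.tendsto_uniformFun_iff_pi atTop (fun y : K => y.1)).mpr hpt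
    exact UniformFun.tendsto_iff_tendstoUniformly.mp this
  have hent : {p : FF × FF | p.2 - p.1 ∈ O} ∈ 𝓤 FF := by
    rw [uniformity_eq_comap_nhds_zero FF]; exact preimage_mem_comap hO
  filter_upwards [huf _ hent] with k hk y hy
  exact hk ⟨y, hy⟩

end Aux

/-- Let `F(Ω)` and `F(Ω,E)` be ε-compatible, i.e. `S : F(Ω) ε E → F(Ω,E)`,
`S(u)(x) = u(δₓ)`, is a (linear topological) isomorphism, let `(fₙ)` be an equicontinuous
Schauder basis of `F(Ω)` with coefficient functionals `(λₙᴷ)`, and let `λₙᴱ : F(Ω,E) → E`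
satisfy `λₙᴱ(S(u)) = u(λₙᴷ)`.  Then every `f ∈ F(Ω,E)` has the convergent series
representation `f = Σₙ λₙᴱ(f) • fₙ` in `F(Ω,E)`. -/
theorem stmt6 {𝕜 Ω FF FE E : Type*} [RCLike 𝕜]
    [FunLike FF Ω 𝕜] [AddCommGroup FF] [Module 𝕜 FF] [UniformSpace FF]
    [IsUniformAddGroup FF] [ContinuousSMul 𝕜 FF] [T2Space FF] [Module ℝ FF]
    [IsScalarTower ℝ 𝕜 FF] [LocallyConvexSpace ℝ FF]
    [AddCommGroup E] [Module 𝕜 E] [UniformSpace E] [IsUniformAddGroup E]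
    [ContinuousSMul 𝕜 E] [T2Space E] [Module ℝ E] [IsScalarTower ℝ 𝕜 E]
    [LocallyConvexSpace ℝ E]
    [FunLike FE Ω E] [AddCommGroup FE] [Module 𝕜 FE] [UniformSpace FE]
    [IsUniformAddGroup FE] [ContinuousSMul 𝕜 FE] [T2Space FE] [Module ℝ FE]
    [IsScalarTower ℝ 𝕜 FE] [LocallyConvexSpace ℝ FE]
    -- the point evaluations `δₓ ∈ F(Ω)'`:
    (δ : Ω → (FF →L[𝕜] 𝕜)) (hδ : ∀ (x : Ω) (g : FF), δ x g = g x)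
    -- ε-compatibility: `S` is a linear topological isomorphism
    (S : EpsilonProduct 𝕜 FF E ≃L[𝕜] FE)
    (hS : ∀ (u : EpsilonProduct 𝕜 FF E) (x : Ω), S u x = u (δ x))
    -- `(fₙ)` is an equicontinuous Schauder basis of `F(Ω)` with functionals `(λₙᴷ)`:
    (f : ℕ → FF) (lam : ℕ → FF →L[𝕜] 𝕜)
    (hrepr : ∀ x : FF,
      Tendsto (fun k => ∑ n ∈ Finset.range k, lam n x • f n) atTop (𝓝 x))
    (huniq : ∀ (x : FF) (c : ℕ → 𝕜),
      Tendsto (fun k => ∑ n ∈ Finset.range k, c n • f n) atTop (𝓝 x) →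
        c = fun n => lam n x)
    (hequi : Equicontinuous
      (fun k : ℕ => fun x : FF => ∑ n ∈ Finset.range k, lam n x • f n))
    -- the maps `λₙᴱ` are compatible with the coefficient functionals:
    (lamE : ℕ → FE → E)
    (hlamE : ∀ (u : EpsilonProduct 𝕜 FF E) (n : ℕ), lamE n (S u) = u (lam n)) :
    ∀ g : FE, ∃ psum : ℕ → FE,
      (∀ (k : ℕ) (x : Ω), psum k x = ∑ n ∈ Finset.range k, f n x • lamE n g) ∧
      Tendsto psum atTop (𝓝 g) := by
  intro g
  have hcover := kappaSets_cover (𝕜 := 𝕜) (FF := FF)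
  haveI : ContinuousEvalConst (DualKappa 𝕜 FF) FF 𝕜 :=
    UniformConvergenceCLM.continuousEvalConst _ _ _ hcover
  set u : EpsilonProduct 𝕜 FF E := S.symm g with hu
  have hSu : S u = g := S.apply_symm_apply g
  let u' : DualKappa 𝕜 FF →L[𝕜] E := u
  have evCont : ∀ y : FF, Continuous (fun φ : DualKappa 𝕜 FF => φ y) := fun y =>
    continuous_eval_const y
  let ev : FF → (DualKappa 𝕜 FF →L[𝕜] 𝕜) := fun y =>
    ⟨⟨⟨fun φ => φ y, fun φ ψ => rfl⟩, fun c φ => rfl⟩, evCont y⟩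
  let v' : ℕ → (DualKappa 𝕜 FF →L[𝕜] E) := fun k =>
    ∑ n ∈ Finset.range k, (ev (f n)).smulRight (u' (lam n))
  let v : ℕ → EpsilonProduct 𝕜 FF E := fun k => v' k
  refine ⟨fun k => S (v k), ?_, ?_⟩
  · intro k x
    rw [hS (v k) x]
    have h1 : (v' k) (δ x) = ∑ n ∈ Finset.range k, (δ x) (f n) • u' (lam n) := by
      erw [ContinuousLinearMap.sum_apply]
      rfl
    have h1' : (v k) (δ x) = ∑ n ∈ Finset.range k, (δ x) (f n) • u' (lam n) := h1
    rw [h1']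
    refine Finset.sum_congr rfl fun n _ => ?_
    rw [hδ x (f n), ← hSu, hlamE u n]
    rfl
  · have hten : Tendsto v atTop (𝓝 u) := by
      rw [← tendsto_sub_nhds_zero_iff]
      have hne : ({S : Set (DualKappa 𝕜 FF) |
          Equicontinuous (fun φ : S => (φ.1 : FF → 𝕜))}).Nonempty := by
        refine ⟨∅, fun x W hW => ?_⟩
        filter_upwards with z i
        exact i.2.elim
      have hdir : DirectedOn (· ⊆ ·) {S : Set (DualKappa 𝕜 FF) |
          Equicontinuous (fun φ : S => (φ.1 : FF → 𝕜))} := by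
        rintro s hs t ht
        refine ⟨s ∪ t, fun x W hW => ?_, Set.subset_union_left, Set.subset_union_right⟩
        filter_upwards [hs x W hW, ht x W hW] with z h1 h2
        rintro ⟨φ, hφ | hφ⟩
        exacts [h1 ⟨φ, hφ⟩, h2 ⟨φ, hφ⟩]
      rw [(UniformConvergenceCLM.hasBasis_nhds_zero (RingHom.id 𝕜) E _ hne
        hdir).tendsto_right_iff]
      rintro ⟨H, U⟩ ⟨hH, hU⟩
      have hHe : Equicontinuous (fun φ : H => ((φ.1 : DualKappa 𝕜 FF) : FF → 𝕜)) := hH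
      have hU0 : (fun φ : DualKappa 𝕜 FF => u' φ) ⁻¹' U ∈ 𝓝 (0 : DualKappa 𝕜 FF) :=
        (map_continuous u').continuousAt.preimage_mem_nhds
          (by rw [map_zero]; exact hU)
      obtain ⟨⟨K, V⟩, ⟨hK, hV⟩, hKV⟩ :=
        ((UniformConvergenceCLM.hasBasis_nhds_zero (RingHom.id 𝕜) 𝕜 (kappaSets 𝕜 FF)
          ⟨{0}, kappaSets_zero_mem⟩ kappaSets_directed).mem_iff).mp hU0
      have hent : {p : 𝕜 × 𝕜 | p.2 - p.1 ∈ V} ∈ 𝓤 𝕜 := by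
        rw [uniformity_eq_comap_nhds_zero 𝕜]; exact preimage_mem_comap hV
      have hO : ∀ᶠ z in 𝓝 (0 : FF), ∀ φ : H, (φ.1 : DualKappa 𝕜 FF) z ∈ V := by
        filter_upwards [hHe 0 _ hent] with z hz φ
        have h3 := hz φ
        simpa using h3
      filter_upwards [partialSum_unif f lam hrepr hequi hK.1 hO] with k hk
      intro φ hφ
      let φ' : FF →L[𝕜] 𝕜 := φ
      let ψ : FF →L[𝕜] 𝕜 := (∑ n ∈ Finset.range k, φ' (f n) • lam n) - φ'
      have key : (ψ : DualKappa 𝕜 FF) ∈ {χ : DualKappa 𝕜 FF | ∀ y ∈ K, χ y ∈ V} := by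
        intro y hy
        have h1 : ψ y = φ' ((∑ n ∈ Finset.range k, lam n y • f n) - y) := by
          simp [ψ, ContinuousLinearMap.sub_apply, ContinuousLinearMap.sum_apply,
            map_sub, map_sum, map_smul, smul_eq_mul, mul_comm]
        have h1' : (ψ : DualKappa 𝕜 FF) y = φ' ((∑ n ∈ Finset.range k, lam n y • f n) - y) := h1
        refine (congrArg (· ∈ V) h1').mpr ?_
        exact hk y hy ⟨φ, hφ⟩
      have hmem := hKV key
      have h2 : (v k - u) φ = u' ψ := by
        show v' k φ' - u' φ' = u' ψ
        erw [ContinuousLinearMap.sum_apply]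
        erw [map_sub u', map_sum u']
        congr 1
        exact Finset.sum_congr rfl fun n _ => (map_smul u' (φ' (f n)) (lam n : DualKappa 𝕜 FF)).symm
      show (v k - u) φ ∈ U
      rw [h2]
      exact hmem
    have h4 : Tendsto (fun k => S (v k)) atTop (𝓝 (S u)) :=
      ((S.continuous.tendsto u).comp hten)
    rwa [hSu] at h4
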